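/- Let n ≥ 1 and let J be the standard symplectic 2n × 2n matrix (block form [[0, I],[−I, 0]]). Let M be a 2n × 2n complex matrix with Mᵀ · J · M = J, and suppose M has finite order, i.e. M^m = 1 for some m ≥ 1. For each root λ of the characteristic polynomial of M (all such roots are roots of unity), let α(λ) denote the unique real number with 0 ≤ α(λ) < 1 and λ = exp(2πi·α(λ)). Then the sum of α(λ) over the roots of the characteristic polynomial of M, counted with multiplicity, equals (2n − d)/2, where d is the dimension of the kernel of M − 1 (the fixed subspace of M). -/

import Mathlib

open scoped Matrix

open Polynomial Matrix in
private theorem charpoly_transpose'' {ι : Type*} [Fintype ι] [DecidableEq ι]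
    (A : Matrix ι ι ℂ) : (Aᵀ).charpoly = A.charpoly := by
  unfold Matrix.charpoly
  rw [show charmatrix (Aᵀ) = (charmatrix A)ᵀ by
    ext i j
    simp only [charmatrix_apply, Matrix.transpose_apply, Matrix.diagonal_apply]
    by_cases h : i = j
    · simp [h]
    · simp [if_neg h, if_neg (fun hji : j = i => h hji.symm)], Matrix.det_transpose]

open Polynomial Matrix in
private theorem charpoly_conj'' {ι : Type*} [Fintype ι] [DecidableEq ι]
    (A P Q : Matrix ι ι ℂ) (h1 : P * Q = 1) :
    (P * A * Q).charpoly = A.charpoly := by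
  have hPQ : P.map C * Q.map C = 1 := by
    rw [← Matrix.map_mul, h1, Matrix.map_one _ (map_zero C) (map_one C)]
  unfold Matrix.charpoly
  have key : charmatrix (P * A * Q) = P.map C * charmatrix A * Q.map C := by
    unfold charmatrix
    rw [Matrix.mul_sub, Matrix.sub_mul]
    congr 1
    · rw [scalar_apply, ← Matrix.smul_one_eq_diagonal, mul_smul_comm, smul_mul_assoc,
        mul_one, hPQ]
    · simp [RingHom.mapMatrix_apply, ← Matrix.map_mul]
  rw [key, Matrix.det_mul, Matrix.det_mul]
  have hdet : det (P.map C) * det (Q.map C) = 1 := by rw [← Matrix.det_mul, hPQ, Matrix.det_one]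
  calc det (P.map C) * det (charmatrix A) * det (Q.map C)
      = det (P.map C) * det (Q.map C) * det (charmatrix A) := by ring
    _ = det (charmatrix A) := by rw [hdet, one_mul]

open Polynomial Matrix in
private theorem reverse_X_sub_C'' (a : ℂ) : (X - C a).reverse = 1 - C a * X := by
  have hX : (X : ℂ[X]).reverse = 1 := by
    have h1 : reverse (1 : ℂ[X]) = 1 := by simpa using reverse_C (1 : ℂ)
    simpa [h1] using reverse_mul_X (1 : ℂ[X])
  have : (X - C a : ℂ[X]) = X + C (-a) := by rw [C_neg]; ring
  rw [this, reverse_add_C, natDegree_X, hX, C_neg, pow_one]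
  ring

open Polynomial Matrix in
private theorem reverse_prod_X_sub_C'' (s : Multiset ℂ) :
    (s.map fun a => X - C a).prod.reverse = (s.map fun a => 1 - C a * X).prod := by
  induction s using Multiset.induction with
  | empty => simpa using (reverse_C (1 : ℂ))
  | cons a s ih =>
    simp only [Multiset.map_cons, Multiset.prod_cons]
    rw [reverse_mul_of_domain, ih, reverse_X_sub_C'']

open Polynomial Matrix in
private theorem roots_charpoly_inv'' {ι : Type*} [Fintype ι] [DecidableEq ι]
    (A N : Matrix ι ι ℂ) (h1 : A * N = 1) :
    (charpoly N).roots = (charpoly A).roots.map (·⁻¹) := by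
  set S := A.charpoly.roots with hS
  have hsplits : A.charpoly.Splits := IsAlgClosed.splits _
  have hprod : A.charpoly = (S.map fun a => X - C a).prod :=
    hsplits.eq_prod_roots_of_monic A.charpoly_monic
  have hdetprod : A.det = S.prod := Matrix.det_eq_prod_roots_charpoly A
  have hdetA : A.det ≠ 0 := by
    intro h
    have := congrArg Matrix.det h1
    rw [Matrix.det_mul, Matrix.det_one, h, zero_mul] at this
    exact zero_ne_one this
  have h0S : (0 : ℂ) ∉ S := fun h =>
    hdetA (by rw [hdetprod]; exact Multiset.prod_eq_zero h)
  have hcard : Multiset.card S = Fintype.card ι := by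
    rw [hS, splits_iff_card_roots.mp hsplits, Matrix.charpoly_natDegree_eq_dim]
  have hAC : A.map C * charmatrix N = (X : ℂ[X]) • A.map C - 1 := by
    unfold charmatrix
    rw [Matrix.mul_sub, scalar_apply, ← Matrix.smul_one_eq_diagonal, mul_smul_comm, mul_one,
      RingHom.mapMatrix_apply, ← Matrix.map_mul, h1, Matrix.map_one _ (map_zero C) (map_one C)]
  have hrev : det ((X : ℂ[X]) • A.map C - 1) = (-1 : ℂ[X]) ^ Fintype.card ι *
      (S.map fun a => 1 - C a * X).prod := by
    have : (X : ℂ[X]) • A.map C - 1 = -(1 - (X : ℂ[X]) • A.map C) := (neg_sub _ _).symm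
    rw [this, Matrix.det_neg, show det (1 - (X : ℂ[X]) • A.map C) = A.charpolyRev from rfl,
      ← Matrix.reverse_charpoly, hprod, reverse_prod_X_sub_C'']
  have key : C A.det * N.charpoly = C A.det * ((S.map (·⁻¹)).map fun a => X - C a).prod := by
    have lhs : C A.det * N.charpoly = det (A.map C * charmatrix N) := by
      rw [Matrix.det_mul, Matrix.charpoly]
      congr 1
      rw [← RingHom.mapMatrix_apply, ← RingHom.map_det]
    have rhs : C A.det * ((S.map (·⁻¹)).map fun a => X - C a).prod =
        (S.map fun a => C a * X - 1).prod := by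
      rw [Multiset.map_map, hdetprod, map_multiset_prod, ← Multiset.prod_map_mul]
      congr 1
      apply Multiset.map_congr rfl
      intro a haS
      have ha : a ≠ 0 := fun h => h0S (h ▸ haS)
      simp only [Function.comp_apply]
      rw [mul_sub, ← C_mul, mul_inv_cancel₀ ha, C_1]
    have rhs2 : (S.map fun a => C a * X - 1).prod =
        (-1 : ℂ[X]) ^ Fintype.card ι * (S.map fun a => 1 - C a * X).prod := by
      rw [← hcard]
      rw [show (fun a : ℂ => C a * X - 1) = fun a => -(1 - C a * X) by funext a; ring]
      induction S using Multiset.induction with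
      | empty => simp
      | cons b s ih => simp only [Multiset.map_cons, Multiset.prod_cons, Multiset.card_cons,
          pow_succ, ih]; ring
    rw [lhs, hAC, hrev, rhs, rhs2]
  have hC : (C A.det : ℂ[X]) ≠ 0 := fun h => hdetA (by simpa using h)
  have : N.charpoly = ((S.map (·⁻¹)).map fun a => X - C a).prod := mul_left_cancel₀ hC key
  rw [this, roots_multiset_prod_X_sub_C]

open Polynomial Matrix in
private theorem charpoly_mulVecLin'' {ι : Type*} [Fintype ι] [DecidableEq ι]
    (B : Matrix ι ι ℂ) :
    (Matrix.mulVecLin B : Module.End ℂ (ι → ℂ)).charpoly = B.charpoly := by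
  rw [← LinearMap.charpoly_toMatrix (Matrix.mulVecLin B) (Pi.basisFun ℂ ι),
    LinearMap.toMatrix_eq_toMatrix', ← Matrix.toLin'_apply', LinearMap.toMatrix'_toLin']

open Polynomial Matrix in
private theorem charpoly_sub_one'' {ι : Type*} [Fintype ι] [DecidableEq ι]
    (A : Matrix ι ι ℂ) :
    (A - 1).charpoly = A.charpoly.comp (X + C 1) := by
  rw [comp_eq_aeval, Matrix.charpoly, Matrix.charpoly, AlgHom.map_det]
  congr 1
  ext i j
  by_cases h : i = j <;>
    simp [charmatrix_apply, h, Matrix.diagonal_apply, Matrix.one_apply, sub_sub, map_sub,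
      aeval_X, aeval_C, algebraMap_eq]
  · ring

open Polynomial Matrix in
private theorem mulVecLin_pow'' {ι : Type*} [Fintype ι] [DecidableEq ι]
    (A : Matrix ι ι ℂ) (k : ℕ) :
    Matrix.mulVecLin (A ^ k) = (Matrix.mulVecLin A) ^ k := by
  induction k with
  | zero => rw [pow_zero, pow_zero]; exact Matrix.mulVecLin_one
  | succ k ih => rw [pow_succ, Matrix.mulVecLin_mul, ih, pow_succ]; rfl

open Polynomial Matrix in
private theorem count_one_eq_finrank'' {ι : Type*} [Fintype ι] [DecidableEq ι]
    (A : Matrix ι ι ℂ) (m : ℕ) (hm : 1 ≤ m) (hA : A ^ m = 1) :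
    A.charpoly.roots.count 1 =
      Module.finrank ℂ (LinearMap.ker (Matrix.mulVecLin (A - 1))) := by
  set f : Module.End ℂ (ι → ℂ) := Matrix.mulVecLin A with hf
  have hsq : Squarefree ((X : ℂ[X]) ^ m - C 1) :=
    (separable_X_pow_sub_C (1 : ℂ)
      (by exact_mod_cast Nat.cast_ne_zero.mpr (by omega)) one_ne_zero).squarefree
  have hfm : f ^ m = 1 := by
    rw [hf, ← mulVecLin_pow'', hA]; exact Matrix.mulVecLin_one
  have hss : f.IsSemisimple := by
    apply Module.End.isSemisimple_of_squarefree_aeval_eq_zero hsq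
    rw [map_sub, aeval_X_pow, aeval_C, hfm]
    simp [Algebra.algebraMap_eq_smul_one]
  set g : Module.End ℂ (ι → ℂ) := Matrix.mulVecLin (A - 1) with hg
  have hgf : g = f - algebraMap ℂ (Module.End ℂ (ι → ℂ)) 1 := by
    rw [_root_.map_one]
    ext v
    simp [hg, hf, Matrix.sub_mulVec, Matrix.one_mulVec, LinearMap.sub_apply,
      Matrix.mulVecLin_apply, Module.End.one_apply, Matrix.one_apply, Pi.single_apply, eq_comm]
  have hgss : g.IsSemisimple := by
    rw [hgf]; exact (Module.End.isSemisimple_sub_algebraMap_iff).mpr hss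
  have h1 : LinearMap.ker g = g.maxGenEigenspace 0 := by
    rw [hgss.isFinitelySemisimple.maxGenEigenspace_eq_eigenspace, Module.End.eigenspace_zero]
  rw [Polynomial.count_roots, rootMultiplicity_eq_natTrailingDegree, ← charpoly_sub_one'',
    ← charpoly_mulVecLin'' (A - 1), ← hg, ← LinearMap.finrank_maxGenEigenspace_zero_eq, ← h1]

private theorem sum_ite_aux'' (f : ℂ → ℝ) :
    ∀ (S : Multiset ℂ), (∀ x ∈ S, f x = if x = 1 then 0 else 1) →
      (S.map f).sum = (Multiset.card S : ℝ) - (S.count 1 : ℝ) := by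
  intro S
  induction S using Multiset.induction with
  | empty => simp
  | cons b s ih =>
    intro h
    have hb := h b (Multiset.mem_cons_self b s)
    have hs := ih fun x hx => h x (Multiset.mem_cons_of_mem hx)
    simp only [Multiset.map_cons, Multiset.sum_cons, Multiset.card_cons, Multiset.count_cons, hs]
    by_cases hb1 : b = 1
    · subst hb1; simp only [hb, if_pos rfl, if_pos rfl]; push_cast; ring
    · rw [hb, if_neg hb1, if_neg (fun h => hb1 h.symm)]; push_cast; ring

private theorem weight_sum_aux (x y : ℝ) (hx0 : 0 ≤ x) (hx1 : x < 1) (hy0 : 0 ≤ y) (hy1 : y < 1)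
    (k : ℤ) (hk : x + y = k) (hne : ¬(x = 0 ∧ y = 0)) : x + y = 1 := by
  have h0 : (0:ℤ) ≤ k := by exact_mod_cast hk ▸ add_nonneg hx0 hy0
  have h2 : k < 2 := by
    have : x + y < 2 := by linarith
    exact_mod_cast hk ▸ this
  interval_cases k
  · exfalso
    apply hne
    push_cast at hk
    constructor <;> linarith
  · exact_mod_cast hk

/-- Let `J` be the standard symplectic `2n × 2n` matrix and `M` a
complex symplectic matrix (`Mᵀ J M = J`) of finite order.  Writing each root `λ` of
the characteristic polynomial of `M` as `λ = exp(2πi·a(λ))` with `0 ≤ a(λ) < 1`, the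
sum of the weights `a(λ)` over the roots (with multiplicity) equals `(2n − d)/2`,
where `d` is the dimension of the fixed subspace `ker(M − 1)`. -/
theorem sum_weights_eq_half_codim_fixed
    (n : ℕ) (hn : 1 ≤ n)
    (J M : Matrix (Fin n ⊕ Fin n) (Fin n ⊕ Fin n) ℂ)
    (hJ : J = Matrix.fromBlocks 0 1 (-1) 0)
    (hM : Mᵀ * J * M = J)
    (m : ℕ) (hm : 1 ≤ m) (hord : M ^ m = 1)
    (a : ℂ → ℝ)
    (ha : ∀ lam ∈ M.charpoly.roots,
      0 ≤ a lam ∧ a lam < 1 ∧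
        Complex.exp (2 * (Real.pi : ℂ) * Complex.I * (a lam : ℂ)) = lam) :
    (M.charpoly.roots.map a).sum =
      (2 * (n : ℝ) -
        (Module.finrank ℂ (LinearMap.ker (Matrix.mulVecLin (M - 1))) : ℝ)) / 2 := by
  classical
  set S := M.charpoly.roots with hS
  -- basic facts about J
  have hJJ : J * J = -1 := by
    rw [hJ, Matrix.fromBlocks_multiply, ← Matrix.fromBlocks_one, Matrix.fromBlocks_neg]
    norm_num
  have hJnegJ : J * (-J) = 1 := by rw [mul_neg, hJJ, neg_neg]
  have hnegJJ : (-J) * J = 1 := by rw [neg_mul, hJJ, neg_neg]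
  -- the inverse of M
  set N := M ^ (m - 1) with hN
  have hMN : M * N = 1 := by
    rw [hN, ← pow_succ']
    rw [show m - 1 + 1 = m by omega, hord]
  have hNM : N * M = 1 := by
    rw [hN, ← pow_succ]
    rw [show m - 1 + 1 = m by omega, hord]
  -- Mᵀ = J * N * (-J)
  have hMT : Mᵀ = J * N * (-J) := by
    have h1 : Mᵀ * J = J * N := by
      calc Mᵀ * J = Mᵀ * J * (M * N) := by rw [hMN, mul_one]
        _ = (Mᵀ * J * M) * N := (mul_assoc _ _ _).symm
        _ = J * N := by rw [hM]
    calc Mᵀ = Mᵀ * (J * (-J)) := by rw [hJnegJ, mul_one]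
      _ = (Mᵀ * J) * (-J) := (mul_assoc _ _ _).symm
      _ = J * N * (-J) := by rw [h1]
  -- charpoly of N equals charpoly of M
  have hcharN : N.charpoly = M.charpoly := by
    rw [← charpoly_transpose'' M, hMT, charpoly_conj'' N J (-J) hJnegJ]
  -- S is invariant under inversion
  have hinv : S.map (·⁻¹) = S := by
    rw [hS, ← roots_charpoly_inv'' M N hMN, hcharN]
  -- membership facts
  have hmemInv : ∀ lam ∈ S, lam⁻¹ ∈ S := fun lam hl => by
    rw [← hinv]; exact Multiset.mem_map_of_mem _ hl
  -- no zero roots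
  have hdetM : M.det ≠ 0 := by
    intro h
    have := congrArg Matrix.det hMN
    rw [Matrix.det_mul, Matrix.det_one, h, zero_mul] at this
    exact zero_ne_one this
  have h0S : ∀ lam ∈ S, lam ≠ 0 := by
    intro lam hl h0
    exact hdetM (by
      rw [Matrix.det_eq_prod_roots_charpoly, ← hS]
      exact Multiset.prod_eq_zero (h0 ▸ hl))
  -- cardinality of S
  have hcard : (Multiset.card S : ℝ) = 2 * n := by
    rw [hS, Polynomial.splits_iff_card_roots.mp (IsAlgClosed.splits _),
      Matrix.charpoly_natDegree_eq_dim]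
    simp [Fintype.card_sum]
    push_cast
    ring
  -- integer equation helper
  have hint : ∀ lam ∈ S, ∃ k : ℤ, a lam + a lam⁻¹ = k := by
    intro lam hl
    obtain ⟨h0a, h1a, hea⟩ := ha lam hl
    obtain ⟨h0b, h1b, heb⟩ := ha lam⁻¹ (hmemInv lam hl)
    have hexp : Complex.exp (2 * (Real.pi : ℂ) * Complex.I * ((a lam : ℂ) + (a lam⁻¹ : ℂ)))
        = 1 := by
      rw [mul_add, Complex.exp_add, hea, heb, mul_inv_cancel₀ (h0S lam hl)]
    obtain ⟨k, hk⟩ := Complex.exp_eq_one_iff.mp hexp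
    refine ⟨k, ?_⟩
    have h2pi : (2 * (Real.pi : ℂ) * Complex.I) ≠ 0 := by
      simp [Real.pi_ne_zero, Complex.I_ne_zero, Complex.ofReal_ne_zero]
    have : ((a lam : ℂ) + (a lam⁻¹ : ℂ)) = (k : ℂ) := by
      apply mul_left_cancel₀ h2pi
      rw [hk]; ring
    exact_mod_cast this
  -- a 1 = 0 when 1 is a root
  have ha1 : ∀ h1 : (1:ℂ) ∈ S, a 1 = 0 := by
    intro h1
    obtain ⟨h0a, h1a, hea⟩ := ha 1 h1
    obtain ⟨k, hk⟩ := Complex.exp_eq_one_iff.mp hea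
    have h2pi : (2 * (Real.pi : ℂ) * Complex.I) ≠ 0 := by
      simp [Real.pi_ne_zero, Complex.I_ne_zero, Complex.ofReal_ne_zero]
    have hak : (a 1 : ℂ) = (k : ℂ) := by
      apply mul_left_cancel₀ h2pi
      rw [hk]; ring
    have hak' : a 1 = (k : ℝ) := by exact_mod_cast hak
    have hk0 : (0:ℤ) ≤ k := by exact_mod_cast hak' ▸ h0a
    have hk1 : k < 1 := by exact_mod_cast hak' ▸ h1a
    have : k = 0 := by omega
    rw [hak', this]; norm_num
  -- the pointwise identity
  have hpt : ∀ lam ∈ S, a lam + a lam⁻¹ = if lam = 1 then 0 else 1 := by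
    intro lam hl
    obtain ⟨h0a, h1a, hea⟩ := ha lam hl
    obtain ⟨h0b, h1b, heb⟩ := ha lam⁻¹ (hmemInv lam hl)
    by_cases h1 : lam = 1
    · subst h1
      rw [if_pos rfl, inv_one, ha1 hl]
      ring
    · rw [if_neg h1]
      obtain ⟨k, hk⟩ := hint lam hl
      apply weight_sum_aux _ _ h0a h1a h0b h1b k hk
      rintro ⟨hx, -⟩
      apply h1
      rw [← hea, hx]
      simp
  -- sum over inverses equals sum
  have hsuminv : (S.map fun lam => a lam⁻¹).sum = (S.map a).sum := by
    conv_rhs => rw [← hinv]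
    rw [Multiset.map_map]
    rfl
  -- the main count
  have hmain : (S.map a).sum + (S.map a).sum
      = (Multiset.card S : ℝ) - (S.count 1 : ℝ) := by
    nth_rewrite 2 [← hsuminv]
    rw [← Multiset.sum_map_add]
    exact sum_ite_aux'' _ S hpt
  have hd : (S.count 1 : ℝ)
      = (Module.finrank ℂ (LinearMap.ker (Matrix.mulVecLin (M - 1))) : ℝ) := by
    rw [hS]
    exact_mod_cast congrArg (fun x : ℕ => (x : ℝ)) (count_one_eq_finrank'' M m hm hord)
  rw [hcard, hd] at hmain
  linarith
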